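/- Let A and B be nonempty finite types, let ρ be a PSD matrix indexed by A × B, let σ be a PSD matrix indexed by B, and let λ ≥ 0 be such that λ·(id_A ⊗ σ) − ρ is PSD. Let P be the orthogonal projector onto the column space of ρ, i.e. P is a matrix indexed by A × B with Pᴴ = P, P·P = P, P·ρ = ρ, and rank P = rank ρ. Then tr(ρ) ≤ λ · tr((id_A ⊗ σ)·P), where both traces are real (the trace of a product of PSD matrices is real and nonnegative). (Equivalently: the min-entropy of ρ relative to σ plus log₂ tr(ρ) is at most the max-entropy of ρ relative to σ.) -/

import Mathlib

open Matrix Kronecker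
open scoped ComplexOrder

/-- Min-entropy cannot be larger than max-entropy: if `λ·(id_A ⊗ σ) − ρ` is PSD and
`P` is the orthogonal projector onto the column space of `ρ`, then
`tr(ρ) ≤ λ · tr((id_A ⊗ σ)·P)`. -/
theorem min_entropy_le_max_entropy
    {A B : Type*} [Fintype A] [Fintype B] [DecidableEq A] [DecidableEq B]
    [Nonempty A] [Nonempty B]
    (ρ : Matrix (A × B) (A × B) ℂ) (hρ : ρ.PosSemidef)
    (σ : Matrix B B ℂ) (hσ : σ.PosSemidef)
    (l : ℝ) (hl : 0 ≤ l)
    (hmin : (l • ((1 : Matrix A A ℂ) ⊗ₖ σ) - ρ).PosSemidef)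
    (P : Matrix (A × B) (A × B) ℂ) (hPH : P.IsHermitian) (hPP : P * P = P)
    (hPρ : P * ρ = ρ) (hrank : P.rank = ρ.rank) :
    ρ.trace.re ≤ l * ((((1 : Matrix A A ℂ) ⊗ₖ σ) * P).trace).re := by
  have key : ∀ (M : Matrix (A × B) (A × B) ℂ), M.PosSemidef → (0:ℂ) ≤ M.trace := by
    intro M hM
    rw [Matrix.trace]
    apply Finset.sum_nonneg
    intro i _
    have := hM.2 (Finsupp.single i 1)
    simpa using this
  set X := (1 : Matrix A A ℂ) ⊗ₖ σ with hX
  have hpsd : (Pᴴ * (l • X - ρ) * P).PosSemidef := hmin.conjTranspose_mul_mul_same P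
  have htr : (0 : ℂ) ≤ (Pᴴ * (l • X - ρ) * P).trace := key _ hpsd
  have heq : (Pᴴ * (l • X - ρ) * P).trace = l • (X * P).trace - ρ.trace := by
    rw [hPH.eq, Matrix.trace_mul_cycle, hPP, Matrix.mul_sub, Matrix.trace_sub,
      Matrix.mul_smul, Matrix.trace_smul, Matrix.trace_mul_comm P X, hPρ]
  rw [heq] at htr
  have h := htr.1
  simp only [Complex.sub_re, Complex.real_smul, Complex.mul_re, Complex.ofReal_re,
    Complex.ofReal_im, Complex.zero_re, zero_mul, sub_zero] at h
  linarith
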